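/- Let Λ be an antichain in (Φ⁺, ≤) with at least two elements and γ ∈ Λ. If Int_C(Λ) = ∅ but Int_C(Λ\{γ}) ≠ ∅, then there is a sign assignment (n_β)_{β∈Λ\{γ}} such that the nonempty set B = C ∩ ⋂_{β∈Λ\{γ}} H^{n_β}_{β,1} is disjoint from the hyperplane H_{γ,1}. -/

import Mathlib

open RealInnerProductSpace

variable {V : Type*} [NormedAddCommGroup V] [InnerProductSpace ℝ V]

/-- The root order: `β ≤ γ` iff `γ - β` is a nonnegative real combination of simple roots. -/
def rle {n : ℕ} (α : Fin n → V) (β γ : V) : Prop :=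
  ∃ c : Fin n → ℝ, (∀ i, 0 ≤ c i) ∧ γ - β = ∑ i, c i • α i

/-- The open dominant chamber. -/
def chamber {n : ℕ} (α : Fin n → V) : Set V :=
  {v | ∀ i, 0 < ⟪v, α i⟫}

/-- Antichain in the root order: pairwise incomparable. -/
def RootAntichain {n : ℕ} (α : Fin n → V) (Λ : Set V) : Prop :=
  ∀ β ∈ Λ, ∀ γ ∈ Λ, (rle α β γ ∨ rle α γ β) → β = γ

/-- Increasing set (dual order ideal) in the positive root poset. -/
def IncreasingIn {n : ℕ} (α : Fin n → V) (Φpos I : Set V) : Prop :=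
  ∀ β ∈ I, ∀ γ ∈ Φpos, rle α β γ → γ ∈ I

/-- Minimal elements of a set in the root order. -/
def rminimals {n : ℕ} (α : Fin n → V) (I : Set V) : Set V :=
  {β ∈ I | ∀ γ ∈ I, rle α γ β → γ = β}

/-- Maximal elements of a set in the root order. -/
def rmaximals {n : ℕ} (α : Fin n → V) (S : Set V) : Set V :=
  {β ∈ S | ∀ γ ∈ S, rle α β γ → γ = β}

/-- The region `R_I` determined by an increasing set `I`. -/
def regionOf {n : ℕ} (α : Fin n → V) (Φpos I : Set V) : Set V :=
  {v ∈ chamber α | (∀ β ∈ I, 1 < ⟪v, β⟫) ∧ ∀ γ ∈ Φpos \ I, ⟪v, γ⟫ < 1}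

/-- The union of the hyperplanes of the Catalan arrangement. -/
def catHyperplanes (Φpos : Set V) : Set V :=
  ⋃ β ∈ Φpos, {v : V | ⟪v, β⟫ = -1 ∨ ⟪v, β⟫ = 0 ∨ ⟪v, β⟫ = 1}

/-- Complement of the union of the affine hyperplanes `(v, β) = 1`, `β ∈ Λ`. -/
def hyperU (Λ : Finset V) : Set V :=
  (⋃ β ∈ Λ, {v : V | ⟪v, β⟫ = 1})ᶜ

/-- The open sign chamber of the arrangement `{H_{β,1}}` determined by signs `s`. -/
def signChamber (Λ : Finset V) (s : V → Bool) : Set V :=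
  ⋂ β ∈ Λ, if s β then {v : V | 1 < ⟪v, β⟫} else {v : V | ⟪v, β⟫ < 1}


/-- A vector with nonzero inner product against each member of a finite set of
nonzero vectors. -/
lemma aux_generic (S : Finset V) (hS : ∀ β ∈ S, β ≠ 0) :
    ∃ g : V, ∀ β ∈ S, ⟪g, β⟫ ≠ 0 := by
  classical
  induction S using Finset.induction_on with
  | empty => exact ⟨0, by simp⟩
  | @insert β₀ S hβ₀ ih =>
    obtain ⟨g, hg⟩ := ih (fun β hβ => hS β (Finset.mem_insert_of_mem hβ))
    have hβ₀0 : β₀ ≠ 0 := hS β₀ (Finset.mem_insert_self _ _)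
    obtain ⟨t, ht⟩ := Infinite.exists_notMem_finset
      ((insert β₀ S).image fun β => -⟪g, β⟫ / ⟪β₀, β⟫)
    refine ⟨g + t • β₀, ?_⟩
    intro β hβ
    rw [inner_add_left, real_inner_smul_left]
    rcases eq_or_ne ⟪β₀, β⟫ 0 with h1 | h1
    · have hβS : β ∈ S := by
        rcases Finset.mem_insert.mp hβ with rfl | h
        · exact absurd h1 (inner_self_ne_zero.mpr hβ₀0)
        · exact h
      rw [h1, mul_zero, add_zero]; exact hg β hβS
    · intro hcon
      apply ht
      refine Finset.mem_image.mpr ⟨β, hβ, ?_⟩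
      field_simp
      linarith


/-- Replace coefficients `b` by achievable ones `⟪d₀, ·⟫` without changing the
associated affine functionals based at `v₀`. -/
lemma aux_proj [FiniteDimensional ℝ V] (S : Finset V) (b : V → ℝ) (v₀ : V) :
    ∃ d₀ : V, ∀ w : V,
      ∑ β ∈ S, ⟪d₀, β⟫ * (⟪w, β⟫ - ⟪v₀, β⟫) = ∑ β ∈ S, b β * (⟪w, β⟫ - ⟪v₀, β⟫) := by
  classical
  let E := EuclideanSpace ℝ ↥S
  let Ψ : V →ₗ[ℝ] E :=
    { toFun := fun v => WithLp.toLp 2 (fun β => ⟪v, (β : V)⟫ : ↥S → ℝ)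
      map_add' := fun x y => PiLp.ext fun β => inner_add_left _ _ _
      map_smul' := fun c x => PiLp.ext fun β => real_inner_smul_left _ _ _ }
  have hΨ : ∀ (v : V) (β : ↥S), Ψ v β = ⟪v, (β : V)⟫ := fun _ _ => rfl
  have hform : ∀ (x : E) (w : V), ⟪x, Ψ w⟫ - ⟪x, Ψ v₀⟫ =
      ∑ β ∈ S, (fun βv => if h : βv ∈ S then x ⟨βv, h⟩ else 0) β * (⟪w, β⟫ - ⟪v₀, β⟫) := by
    intro x w
    rw [← Finset.sum_coe_sort S]
    simp only [E, PiLp.inner_apply, RCLike.inner_apply, conj_trivial, hΨ]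
    rw [← Finset.sum_sub_distrib]
    refine Finset.sum_congr rfl fun β _ => ?_
    rw [dif_pos β.2]
    ring_nf
  set T := LinearMap.range Ψ with hT
  let bE : E := WithLp.toLp 2 fun β => b (β : V)
  obtain ⟨y, hy, z, hz, hbe⟩ := T.exists_add_mem_mem_orthogonal bE
  obtain ⟨d₀, hd₀⟩ := hy
  refine ⟨d₀, fun w => ?_⟩
  have hz0 : ∀ v : V, ⟪z, Ψ v⟫ = 0 := by
    intro v
    rw [real_inner_comm]
    exact hz _ (LinearMap.mem_range_self Ψ v)
  have hb' : ∀ β ∈ S, (fun βv => if h : βv ∈ S then bE ⟨βv, h⟩ else 0) β = b β := by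
    intro β hβ; dsimp only; rw [dif_pos hβ]
  have hd' : ∀ β ∈ S, (fun βv => if h : βv ∈ S then (Ψ d₀ : E) ⟨βv, h⟩ else 0) β
      = ⟪d₀, β⟫ := by
    intro β hβ; dsimp only; rw [dif_pos hβ]; exact hΨ d₀ ⟨β, hβ⟩
  calc ∑ β ∈ S, ⟪d₀, β⟫ * (⟪w, β⟫ - ⟪v₀, β⟫)
      = ⟪Ψ d₀, Ψ w⟫ - ⟪Ψ d₀, Ψ v₀⟫ := by
        rw [hform (Ψ d₀) w]
        exact (Finset.sum_congr rfl fun β hβ => by rw [hd' β hβ]).symm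
    _ = ∑ β ∈ S, b β * (⟪w, β⟫ - ⟪v₀, β⟫) := by
        have hyz : Ψ d₀ = bE - z := by
          rw [hbe, hd₀]; abel
        rw [hyz, inner_sub_left, inner_sub_left, hz0 w, hz0 v₀, sub_zero, sub_zero,
          hform]
        exact Finset.sum_congr rfl fun β hβ => by rw [hb' β hβ]

lemma chamber_isOpen {n : ℕ} (α : Fin n → V) : IsOpen (chamber α) := by
  have : chamber α = ⋂ i, {v : V | 0 < ⟪v, α i⟫} := Set.setOf_forall _
  rw [this]
  exact isOpen_iInter_of_finite fun i =>
    isOpen_lt continuous_const (continuous_id.inner continuous_const)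

lemma chamber_convex {n : ℕ} (α : Fin n → V) : Convex ℝ (chamber α) := by
  have : chamber α = ⋂ i, {v : V | 0 < ⟪v, α i⟫} := Set.setOf_forall _
  rw [this]
  refine convex_iInter fun i => convex_halfSpace_gt (f := fun v : V => ⟪v, α i⟫)
    ⟨fun x y => inner_add_left _ _ _, fun c x => real_inner_smul_left _ _ _⟩ (0 : ℝ)

/-- The linear projection along `γ` onto the hyperplane `⟪γ, ·⟫ = 0`. -/
noncomputable def Lgam (γ : V) : V →ₗ[ℝ] V where
  toFun := fun v => v - (⟪γ, v⟫ / ⟪γ, γ⟫) • γ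
  map_add' := by
    intro x y
    rw [inner_add_right, add_div, add_smul]
    abel
  map_smul' := by
    intro c x
    simp only [real_inner_smul_right, RingHom.id_apply, smul_sub, mul_div_assoc, mul_smul]

@[simp] lemma Lgam_apply (γ v : V) : Lgam γ v = v - (⟪γ, v⟫ / ⟪γ, γ⟫) • γ := rfl

/-- The affine projection along `γ` onto the hyperplane `⟪γ, ·⟫ = 1`. -/
noncomputable def pivA (γ : V) : V →ᵃ[ℝ] V where
  toFun := fun v => v - ((⟪γ, v⟫ - 1) / ⟪γ, γ⟫) • γ
  linear := Lgam γ
  map_vadd' := by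
    intro p v
    rw [vadd_eq_add, vadd_eq_add, inner_add_right, Lgam_apply,
      show (⟪γ, v⟫ + ⟪γ, p⟫ - 1) / ⟪γ, γ⟫ = ⟪γ, v⟫ / ⟪γ, γ⟫ + (⟪γ, p⟫ - 1) / ⟪γ, γ⟫ by ring,
      add_smul]
    abel

@[simp] lemma pivA_apply (γ v : V) : pivA γ v = v - ((⟪γ, v⟫ - 1) / ⟪γ, γ⟫) • γ := rfl

lemma pivA_fix {γ : V} (v : V) (h : ⟪γ, v⟫ = 1) : pivA γ v = v := by
  rw [pivA_apply, h]; simp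

lemma pivA_inner (γ v β : V) :
    ⟪pivA γ v, β⟫ = ⟪v, β⟫ - ((⟪γ, v⟫ - 1) / ⟪γ, γ⟫) * ⟪γ, β⟫ := by
  rw [pivA_apply, inner_sub_left, real_inner_smul_left]

/-- Step 1: a linear functional negative on `C ∩ H_{γ,1}`. -/
lemma step_one [FiniteDimensional ℝ V] {n : ℕ} (α : Fin n → V) (Λ' : Finset V) (γ : V)
    (hγγ : ⟪γ, γ⟫ ≠ 0) (v₀ : V) (hv₀C : v₀ ∈ chamber α) (hv₀ : ∀ β ∈ Λ', ⟪v₀, β⟫ = 1)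
    (hempty : ¬ ∃ v ∈ chamber α, (∀ β ∈ Λ', ⟪v, β⟫ = 1) ∧ ⟪v, γ⟫ = 1) :
    ∃ b : V → ℝ, ∀ w ∈ chamber α, ⟪w, γ⟫ = 1 →
      ∑ β ∈ Λ', b β * (⟪w, β⟫ - 1) < 0 := by
  classical
  by_cases hcase : ∃ p : V, ⟪p, γ⟫ = 1 ∧ ∀ β ∈ Λ', ⟪p, β⟫ = 1
  · -- Hahn–Banach case
    obtain ⟨p, hpγ, hpβ⟩ := hcase
    set Uh : Set V := (pivA γ) ⁻¹' (chamber α) with hUhdef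
    have hUhopen : IsOpen Uh := (chamber_isOpen α).preimage (pivA γ).continuous_of_finiteDimensional
    have hUhconv : Convex ℝ Uh := (chamber_convex α).affine_preimage (pivA γ)
    have hAconvset : Convex ℝ {v : V | ∀ β ∈ Λ', ⟪v, β⟫ = 1} := by
      intro x hx y hy a b ha hb hab β hβ
      simp only [Set.mem_setOf_eq] at hx hy ⊢
      rw [inner_add_left, real_inner_smul_left, real_inner_smul_left, hx β hβ, hy β hβ]
      linarith
    set Ah : Set V := (pivA γ) ⁻¹' {v : V | ∀ β ∈ Λ', ⟪v, β⟫ = 1} with hAhdef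
    have hAhconv : Convex ℝ Ah := hAconvset.affine_preimage (pivA γ)
    have hdisj : Disjoint Uh Ah := by
      rw [Set.disjoint_left]
      intro v hvU hvA
      refine hempty ⟨pivA γ v, hvU, hvA, ?_⟩
      rw [pivA_inner, real_inner_comm _ γ]
      field_simp
      ring
    obtain ⟨f, u, hfU, hfA⟩ := geometric_hahn_banach_open hUhconv hUhopen hAhconv hdisj
    have hpA : p ∈ Ah := by
      rw [hAhdef, Set.mem_preimage, pivA_fix p (by rw [real_inner_comm]; exact hpγ)]
      exact hpβ
    have hker : ∀ x : V, (∀ β ∈ Λ', ⟪x, Lgam γ β⟫ = 0) → f x = 0 := by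
      intro x hx
      by_contra hfx
      have hmem : ∀ t : ℝ, p + t • x ∈ Ah := by
        intro t
        rw [hAhdef, Set.mem_preimage]
        intro β hβ
        have hxβ := hx β hβ
        rw [Lgam_apply, inner_sub_right, real_inner_smul_right] at hxβ
        rw [pivA_inner, inner_add_left, real_inner_smul_left, inner_add_right,
          real_inner_smul_right, hpβ β hβ,
          show ⟪γ, p⟫ = 1 by rw [real_inner_comm]; exact hpγ]
        have e5 : ⟪γ, x⟫ = ⟪x, γ⟫ := real_inner_comm _ _
        rw [e5]
        linear_combination t * hxβ
      have hb : ∀ t : ℝ, u ≤ f p + t * f x := by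
        intro t
        have := hfA _ (hmem t)
        rwa [map_add, map_smul, smul_eq_mul] at this
      have h2 := hb ((u - 1 - f p) / f x)
      rw [div_mul_cancel₀ _ hfx] at h2
      linarith
    set z₀ : V := (InnerProductSpace.toDual ℝ V).symm f with hz₀def
    have hz₀ : ∀ v : V, ⟪z₀, v⟫ = f v := fun v => InnerProductSpace.toDual_symm_apply
    set M : Submodule ℝ V := Submodule.span ℝ ((Lgam γ) '' (↑Λ' : Set V)) with hMdef
    have hz₀M : z₀ ∈ M := by
      rw [← Submodule.orthogonal_orthogonal M, Submodule.mem_orthogonal]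
      intro x hx
      rw [real_inner_comm, hz₀]
      apply hker
      intro β hβ
      rw [real_inner_comm]
      exact hx _ (Submodule.subset_span ⟨β, Finset.mem_coe.mpr hβ, rfl⟩)
    rw [hMdef, Submodule.span_image] at hz₀M
    obtain ⟨y, hymem, hyz⟩ := Submodule.mem_map.mp hz₀M
    obtain ⟨b, -, hby⟩ := Submodule.mem_span_finset.mp hymem
    refine ⟨b, ?_⟩
    intro w hwC hwγ
    have hwU : w ∈ Uh := by
      rw [hUhdef, Set.mem_preimage, pivA_fix w (by rw [real_inner_comm]; exact hwγ)]
      exact hwC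
    have h1 : f w < u := hfU w hwU
    have h2 : u ≤ f p := hfA p hpA
    have hterm : ∀ β ∈ Λ', ⟪Lgam γ β, w - p⟫ = ⟪w, β⟫ - 1 := by
      intro β hβ
      have e1 : ⟪β, p⟫ = 1 := by rw [real_inner_comm]; exact hpβ β hβ
      have e2 : ⟪γ, w⟫ = 1 := by rw [real_inner_comm]; exact hwγ
      have e3 : ⟪γ, p⟫ = 1 := by rw [real_inner_comm]; exact hpγ
      have e4 : ⟪β, w⟫ = ⟪w, β⟫ := real_inner_comm _ _
      rw [Lgam_apply, inner_sub_left, real_inner_smul_left, inner_sub_right,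
        inner_sub_right, e1, e2, e3, e4]
      ring
    have hkey : ∑ β ∈ Λ', b β * (⟪w, β⟫ - 1) = f w - f p := by
      calc ∑ β ∈ Λ', b β * (⟪w, β⟫ - 1)
          = ∑ β ∈ Λ', b β * ⟪Lgam γ β, w - p⟫ :=
            Finset.sum_congr rfl fun β hβ => by rw [hterm β hβ]
        _ = ⟪Lgam γ y, w - p⟫ := by
            rw [← hby, map_sum, sum_inner]
            exact Finset.sum_congr rfl fun β hβ => by
              rw [LinearMap.map_smul, real_inner_smul_left]
        _ = f w - f p := by rw [hyz, inner_sub_right, hz₀, hz₀]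
    linarith
  · -- degenerate case: γ lies in the span of Λ'
    have horth : ∀ x : V, (∀ β ∈ Λ', ⟪x, β⟫ = 0) → ⟪x, γ⟫ = 0 := by
      intro x hx
      by_contra hr
      apply hcase
      refine ⟨v₀ + ((1 - ⟪v₀, γ⟫) / ⟪x, γ⟫) • x, ?_, ?_⟩
      · rw [inner_add_left, real_inner_smul_left]
        field_simp
        ring
      · intro β hβ
        rw [inner_add_left, real_inner_smul_left, hx β hβ, hv₀ β hβ]
        ring
    have hγspan : γ ∈ Submodule.span ℝ (↑Λ' : Set V) := by
      rw [← Submodule.orthogonal_orthogonal (Submodule.span ℝ (↑Λ' : Set V)),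
        Submodule.mem_orthogonal]
      intro x hx
      apply horth
      intro β hβ
      rw [real_inner_comm]
      exact hx _ (Submodule.subset_span (Finset.mem_coe.mpr hβ))
    obtain ⟨a, -, ha⟩ := Submodule.mem_span_finset.mp hγspan
    set t₀ : ℝ := ∑ β ∈ Λ', a β with ht₀def
    have hsum : ∀ w : V, ∑ β ∈ Λ', a β * (⟪w, β⟫ - 1) = ⟪w, γ⟫ - t₀ := by
      intro w
      rw [← ha, inner_sum, ht₀def, ← Finset.sum_sub_distrib]
      exact Finset.sum_congr rfl fun β hβ => by rw [real_inner_smul_right]; ring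
    have ht₀v₀ : ⟪v₀, γ⟫ = t₀ := by
      have := hsum v₀
      rw [show ∑ β ∈ Λ', a β * (⟪v₀, β⟫ - 1) = 0 from
        Finset.sum_eq_zero fun β hβ => by rw [hv₀ β hβ]; ring] at this
      linarith
    have ht₀ne : t₀ ≠ 1 := by
      intro h
      exact hcase ⟨v₀, by rw [ht₀v₀, h], hv₀⟩
    set η : ℝ := if 1 < t₀ then 1 else -1 with hηdef
    refine ⟨fun β => η * a β, ?_⟩
    intro w _ hwγ
    have : ∑ β ∈ Λ', η * a β * (⟪w, β⟫ - 1) = η * (1 - t₀) := by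
      have e : ∑ β ∈ Λ', η * a β * (⟪w, β⟫ - 1) = η * ∑ β ∈ Λ', a β * (⟪w, β⟫ - 1) := by
        rw [Finset.mul_sum]
        exact Finset.sum_congr rfl fun β _ => by ring
      rw [e, hsum w, hwγ]
    rw [this]
    rcases lt_or_ge 1 t₀ with h | h
    · rw [hηdef, if_pos h]; nlinarith
    · rw [hηdef, if_neg (not_lt.mpr h)]
      have : t₀ < 1 := lt_of_le_of_ne h ht₀ne
      nlinarith

theorem stmt16 [DecidableEq V]
    [FiniteDimensional ℝ V] {n : ℕ} (α : Fin n → V) (Φ Φpos : Finset V)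
    (hind : LinearIndependent ℝ α)
    (hspan : Submodule.span ℝ (Set.range α) = ⊤)
    (hαΦ : ∀ i, α i ∈ Φ)
    (h0 : (0 : V) ∉ Φ)
    (hrefl : ∀ β ∈ Φ, ∀ γ ∈ Φ, γ - (2 * ⟪γ, β⟫ / ⟪β, β⟫) • β ∈ Φ)
    (hmul : ∀ β ∈ Φ, ∀ t : ℝ, t • β ∈ Φ → t = 1 ∨ t = -1)
    (hpos : ∀ β : V, β ∈ Φpos ↔
      β ∈ Φ ∧ ∃ c : Fin n → ℝ, (∀ i, 0 ≤ c i) ∧ β = ∑ i, c i • α i)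
    (hpm : ∀ β ∈ Φ, β ∈ Φpos ∨ -β ∈ Φpos)
    (Λ : Finset V) (hΛpos : ↑Λ ⊆ (↑Φpos : Set V)) (hA : RootAntichain α ↑Λ)
    (hcard : 2 ≤ Λ.card) (γ : V) (hγ : γ ∈ Λ)
    (hempty : ¬ ∃ v ∈ chamber α, ∀ β ∈ Λ, ⟪v, β⟫ = 1)
    (hsub : ∃ v ∈ chamber α, ∀ β ∈ Λ.erase γ, ⟪v, β⟫ = 1) :
    ∃ s : V → Bool,
      (chamber α ∩ signChamber (Λ.erase γ) s).Nonempty ∧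
      (chamber α ∩ signChamber (Λ.erase γ) s) ∩ {v : V | ⟪v, γ⟫ = 1} = ∅ := by
  classical
  obtain ⟨v₀, hv₀C, hv₀⟩ := hsub
  have hγΦpos : γ ∈ Φpos := hΛpos (Finset.mem_coe.mpr hγ)
  have hγ0 : γ ≠ 0 := fun h => h0 (h ▸ ((hpos γ).mp hγΦpos).1)
  have hγγ : ⟪γ, γ⟫ ≠ 0 := inner_self_ne_zero.mpr hγ0
  set Λ' : Finset V := Λ.erase γ with hΛ'def
  have hempty' : ¬ ∃ v ∈ chamber α, (∀ β ∈ Λ', ⟪v, β⟫ = 1) ∧ ⟪v, γ⟫ = 1 := by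
    rintro ⟨v, hvC, hvβ, hvγ⟩
    refine hempty ⟨v, hvC, fun β hβ => ?_⟩
    rcases eq_or_ne β γ with rfl | hne
    · exact hvγ
    · exact hvβ β (Finset.mem_erase.mpr ⟨hne, hβ⟩)
  obtain ⟨b, hb⟩ := step_one α Λ' γ hγγ v₀ hv₀C hv₀ hempty'
  obtain ⟨d₀, hd₀eq⟩ := aux_proj Λ' b v₀
  have hd₀ : ∀ w ∈ chamber α, ⟪w, γ⟫ = 1 →
      ∑ β ∈ Λ', ⟪d₀, β⟫ * (⟪w, β⟫ - 1) < 0 := by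
    intro w hwC hwγ
    have e1 : ∑ β ∈ Λ', ⟪d₀, β⟫ * (⟪w, β⟫ - 1)
        = ∑ β ∈ Λ', ⟪d₀, β⟫ * (⟪w, β⟫ - ⟪v₀, β⟫) :=
      Finset.sum_congr rfl fun β hβ => by rw [hv₀ β hβ]
    have e2 : ∑ β ∈ Λ', b β * (⟪w, β⟫ - 1)
        = ∑ β ∈ Λ', b β * (⟪w, β⟫ - ⟪v₀, β⟫) :=
      Finset.sum_congr rfl fun β hβ => by rw [hv₀ β hβ]
    rw [e1, hd₀eq w, ← e2]
    exact hb w hwC hwγ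
  have hne0 : ∀ β ∈ Λ', β ≠ 0 := fun β hβ h => h0 (h ▸
    ((hpos β).mp (hΛpos (Finset.mem_coe.mpr (Finset.mem_of_mem_erase hβ)))).1)
  obtain ⟨g, hg⟩ := aux_generic Λ' hne0
  set s : V → Bool := fun β => if ⟪d₀, β⟫ = 0 then decide (0 < ⟪g, β⟫)
    else decide (0 < ⟪d₀, β⟫) with hsdef
  refine ⟨s, ?_, ?_⟩
  · -- Nonemptiness
    have h1 : ∀ᶠ t in nhdsWithin (0:ℝ) (Set.Ioi 0), v₀ + t • d₀ ∈ chamber α := by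
      refine Filter.Eventually.filter_mono nhdsWithin_le_nhds ?_
      refine Filter.eventually_iff.mpr (((chamber_isOpen α).preimage
        (continuous_const.add (continuous_id.smul continuous_const))).mem_nhds ?_)
      simpa using hv₀C
    have h2 : ∀ᶠ t in nhdsWithin (0:ℝ) (Set.Ioi 0), (0:ℝ) < t :=
      eventually_nhdsWithin_of_forall fun x hx => hx
    obtain ⟨t₀, ht₀C, ht₀pos⟩ := (h1.and h2).exists
    have h3 : ∀ᶠ u in nhdsWithin (0:ℝ) (Set.Ioi 0),
        v₀ + t₀ • d₀ + u • g ∈ chamber α := by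
      refine Filter.Eventually.filter_mono nhdsWithin_le_nhds ?_
      refine Filter.eventually_iff.mpr (((chamber_isOpen α).preimage
        (continuous_const.add (continuous_id.smul continuous_const))).mem_nhds ?_)
      simpa using ht₀C
    have h4 : ∀ᶠ u in nhdsWithin (0:ℝ) (Set.Ioi 0), ∀ β ∈ Λ', ⟪d₀, β⟫ ≠ 0 →
        (if 0 < ⟪d₀, β⟫ then 1 < ⟪v₀ + t₀ • d₀ + u • g, β⟫
          else ⟪v₀ + t₀ • d₀ + u • g, β⟫ < 1) := by
      rw [Filter.eventually_all_finset]
      intro β hβ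
      rcases eq_or_ne ⟪d₀, β⟫ 0 with h | h
      · exact Filter.Eventually.of_forall fun u hcon => absurd h hcon
      have hic : Continuous fun u : ℝ => ⟪v₀ + t₀ • d₀ + u • g, β⟫ :=
        Continuous.inner (continuous_const.add (continuous_id.smul continuous_const))
          continuous_const
      have hbase : ⟪v₀ + t₀ • d₀, β⟫ = 1 + t₀ * ⟪d₀, β⟫ := by
        rw [inner_add_left, real_inner_smul_left, hv₀ β hβ]
      rcases h.lt_or_gt with hneg | hpos
      · have hlt : ⟪v₀ + t₀ • d₀ + (0:ℝ) • g, β⟫ < 1 := by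
          rw [zero_smul, add_zero, hbase]; nlinarith
        have := (hic.continuousAt (x := (0:ℝ))).eventually_lt_const hlt
        refine Filter.Eventually.filter_mono nhdsWithin_le_nhds (this.mono fun u hu hne => ?_)
        rw [if_neg (not_lt.mpr hneg.le)]
        exact hu
      · have hlt : 1 < ⟪v₀ + t₀ • d₀ + (0:ℝ) • g, β⟫ := by
          rw [zero_smul, add_zero, hbase]; nlinarith
        have := (hic.continuousAt (x := (0:ℝ))).eventually_const_lt hlt
        refine Filter.Eventually.filter_mono nhdsWithin_le_nhds (this.mono fun u hu hne => ?_)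
        rw [if_pos hpos]
        exact hu
    obtain ⟨u, ⟨huC, huS⟩, hupos⟩ := ((h3.and h4).and h2).exists
    refine ⟨v₀ + t₀ • d₀ + u • g, huC, ?_⟩
    simp only [signChamber, Set.mem_iInter]
    intro β hβ
    have hinner : ⟪v₀ + t₀ • d₀ + u • g, β⟫ = 1 + t₀ * ⟪d₀, β⟫ + u * ⟪g, β⟫ := by
      rw [inner_add_left, inner_add_left, real_inner_smul_left, real_inner_smul_left,
        hv₀ β hβ]
    rcases eq_or_ne ⟪d₀, β⟫ 0 with hc | hc
    · rcases (hg β hβ).lt_or_gt with hgneg | hgpos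
      · have hsβ : s β = false := by
          rw [hsdef]; simp [hc, not_lt.mpr hgneg.le]
        rw [if_neg (by simp [hsβ])]
        show ⟪v₀ + t₀ • d₀ + u • g, β⟫ < 1
        rw [hinner, hc]; nlinarith
      · have hsβ : s β = true := by
          rw [hsdef]; simp [hc, hgpos]
        rw [if_pos (by simp [hsβ])]
        show 1 < ⟪v₀ + t₀ • d₀ + u • g, β⟫
        rw [hinner, hc]; nlinarith
    · have := huS β hβ hc
      rcases lt_or_ge 0 ⟪d₀, β⟫ with hpos | hneg
      · rw [if_pos hpos] at this
        have hsβ : s β = true := by rw [hsdef]; simp [hc, hpos]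
        rw [if_pos (by simp [hsβ])]
        exact this
      · rw [if_neg (not_lt.mpr hneg)] at this
        have hsβ : s β = false := by
          rw [hsdef]; simp [hc, not_lt.mpr hneg]
        rw [if_neg (by simp [hsβ])]
        exact this
  · -- Disjointness from the hyperplane
    rw [Set.eq_empty_iff_forall_notMem]
    rintro w ⟨⟨hwC, hwS⟩, hwγ⟩
    have hwγ' : ⟪w, γ⟫ = 1 := hwγ
    have hneg := hd₀ w hwC hwγ'
    simp only [signChamber, Set.mem_iInter] at hwS
    have hnn : 0 ≤ ∑ β ∈ Λ', ⟪d₀, β⟫ * (⟪w, β⟫ - 1) := by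
      refine Finset.sum_nonneg fun β hβ => ?_
      rcases eq_or_ne ⟪d₀, β⟫ 0 with hc | hc
      · rw [hc, zero_mul]
      have hmem := hwS β hβ
      rcases lt_or_ge 0 ⟪d₀, β⟫ with hp | hn
      · have hsβ : s β = true := by rw [hsdef]; simp [hc, hp]
        rw [if_pos (by simp [hsβ])] at hmem
        have : 1 < ⟪w, β⟫ := hmem
        nlinarith
      · have hsβ : s β = false := by rw [hsdef]; simp [hc, not_lt.mpr hn]
        rw [if_neg (by simp [hsβ])] at hmem
        have : ⟪w, β⟫ < 1 := hmem
        have hlt : ⟪d₀, β⟫ < 0 := lt_of_le_of_ne hn hc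
        nlinarith
    linarith
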